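/- For j = 1, …, m, let α_j > 0, let L_j be slowly varying at infinity, and let B_j : [0,∞) → (0,1] be continuous with B_j(0) = 1 and B_j(z) = z^{−α_j} L_j(z) for z > 0. Let l_0 ≥ 1 be an integer and let (k_{1,l_0}, …, k_{m,l_0}) be nonnegative integers with ∑_{j=1}^m k_{j,l_0} = l_0 and ∑_{j=1}^m α_j k_{j,l_0} < (l_0 + 1) · min_{1≤j≤m} α_j. Then there exists a constant C > 0 such that for every integer l > l_0, every tuple (k_{1,l}, …, k_{m,l}) of nonnegative integers with ∑_{j=1}^m k_{j,l} = l, and every z ≥ 0, one has ∏_{j=1}^m B_j(z)^{k_{j,l}} ≤ C · ∏_{j=1}^m B_j(z)^{k_{j,l_0}}. -/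

import Mathlib

open Finset Filter

/-- A measurable function `L : (0,∞) → (0,∞)` is slowly varying at infinity if
`L(λz)/L(z) → 1` as `z → ∞` for every `λ > 0`. -/
def SlowlyVarying (L : ℝ → ℝ) : Prop :=
  Measurable L ∧ (∀ z : ℝ, 0 < z → 0 < L z) ∧
    ∀ lam : ℝ, 0 < lam → Tendsto (fun z => L (lam * z) / L z) atTop (nhds 1)

lemma aux_exists_le {m : ℕ} (n : ℕ) : ∀ (k : Fin m → ℕ), n ≤ ∑ j, k j →
    ∃ k' : Fin m → ℕ, (∀ j, k' j ≤ k j) ∧ ∑ j, k' j = n := by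
  have H : ∀ (s : ℕ) (k : Fin m → ℕ), ∑ j, k j = s → n ≤ s →
      ∃ k' : Fin m → ℕ, (∀ j, k' j ≤ k j) ∧ ∑ j, k' j = n := by
    intro s
    induction s with
    | zero => intro k hk hn; exact ⟨k, fun j => le_rfl, by omega⟩
    | succ s ih =>
      intro k hk hn
      rcases eq_or_lt_of_le hn with h | h
      · exact ⟨k, fun j => le_rfl, by omega⟩
      · have hpos : ∑ j, k j ≠ 0 := by omega
        obtain ⟨j0, -, hj0⟩ := Finset.exists_ne_zero_of_sum_ne_zero hpos
        set k1 : Fin m → ℕ := Function.update k j0 (k j0 - 1) with hk1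
        have hsum1 : ∑ j, k1 j = s := by
          rw [hk1, Finset.sum_update_of_mem (Finset.mem_univ j0),
            Finset.sdiff_singleton_eq_erase]
          have := Finset.add_sum_erase Finset.univ k (Finset.mem_univ j0)
          omega
        obtain ⟨k', hle, hsum⟩ := ih k1 hsum1 (by omega)
        refine ⟨k', fun j => (hle j).trans ?_, hsum⟩
        by_cases hj : j = j0
        · subst hj
          simp only [hk1, Function.update_self]
          omega
        · simp [hk1, Function.update_of_ne hj]
  exact fun k hk => H (∑ j, k j) k rfl hk

lemma key_bound {m : ℕ} (α : Fin m → ℝ) (hα : ∀ j, 0 < α j)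
    (L : Fin m → ℝ → ℝ) (hL : ∀ j, SlowlyVarying (L j))
    (B : Fin m → ℝ → ℝ)
    (hBcont : ∀ j, ContinuousOn (B j) (Set.Ici 0))
    (hBmem : ∀ j, ∀ z : ℝ, 0 ≤ z → B j z ∈ Set.Ioc (0 : ℝ) 1)
    (hBeq : ∀ j, ∀ z : ℝ, 0 < z → B j z = z ^ (-(α j)) * L j z)
    (k₀ k' : Fin m → ℕ)
    (hθ : ∑ j, α j * (k₀ j : ℝ) < ∑ j, α j * (k' j : ℝ)) :
    ∃ C : ℝ, 0 < C ∧ ∀ z : ℝ, 0 ≤ z →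
      ∏ j, B j z ^ k' j ≤ C * ∏ j, B j z ^ k₀ j := by
  set g : ℝ → ℝ := fun z => ∏ j, B j z ^ k' j with hgdef
  set h : ℝ → ℝ := fun z => ∏ j, B j z ^ k₀ j with hhdef
  have hBpos : ∀ j, ∀ z : ℝ, 0 ≤ z → 0 < B j z := fun j z hz => (hBmem j z hz).1
  have hgpos : ∀ z : ℝ, 0 ≤ z → 0 < g z := fun z hz =>
    Finset.prod_pos fun j _ => pow_pos (hBpos j z hz) _
  have hhpos : ∀ z : ℝ, 0 ≤ z → 0 < h z := fun z hz =>
    Finset.prod_pos fun j _ => pow_pos (hBpos j z hz) _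
  -- ratio tendsto for each j
  have hrat : ∀ j, Tendsto (fun z => B j (2 * z) / B j z) atTop
      (nhds ((2 : ℝ) ^ (-(α j)))) := by
    intro j
    have hLlim := (hL j).2.2 2 two_pos
    have hlim : Tendsto (fun z => (2 : ℝ) ^ (-(α j)) * (L j (2 * z) / L j z)) atTop
        (nhds ((2 : ℝ) ^ (-(α j)))) := by
      simpa using (tendsto_const_nhds (x := ((2:ℝ) ^ (-(α j))))).mul hLlim
    refine Tendsto.congr' ?_ hlim
    filter_upwards [eventually_gt_atTop (0 : ℝ)] with z hz
    have h2z : (0 : ℝ) < 2 * z := by linarith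
    have hLz : 0 < L j z := (hL j).2.1 z hz
    have hzα : (0 : ℝ) < z ^ (-(α j)) := Real.rpow_pos_of_pos hz _
    rw [hBeq j z hz, hBeq j (2 * z) h2z,
      Real.mul_rpow (by norm_num) hz.le]
    field_simp
  have hrat' : ∀ j, Tendsto (fun z => B j z / B j (2 * z)) atTop
      (nhds ((2 : ℝ) ^ (α j))) := by
    intro j
    have h1 : ((2 : ℝ) ^ (-(α j)))⁻¹ = (2 : ℝ) ^ (α j) := by
      rw [← Real.rpow_neg (by norm_num)]; simp
    have := (hrat j).inv₀ (ne_of_gt (Real.rpow_pos_of_pos two_pos _))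
    rw [h1] at this
    refine Tendsto.congr' ?_ this
    filter_upwards [eventually_gt_atTop (0 : ℝ)] with z hz
    rw [inv_div]
  -- the double-ratio tends to a limit < 1
  set ρ : ℝ → ℝ := fun z =>
    (∏ j, (B j (2 * z) / B j z) ^ k' j) * ∏ j, (B j z / B j (2 * z)) ^ k₀ j with hρdef
  set P : ℝ :=
    (∏ j, ((2 : ℝ) ^ (-(α j))) ^ k' j) * ∏ j, ((2 : ℝ) ^ (α j)) ^ k₀ j with hPdef
  have hρlim : Tendsto ρ atTop (nhds P) := by
    refine Tendsto.mul ?_ ?_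
    · exact tendsto_finset_prod _ fun j _ => (hrat j).pow _
    · exact tendsto_finset_prod _ fun j _ => (hrat' j).pow _
  have hPlt : P < 1 := by
    have hP : P = (2 : ℝ) ^ ((∑ j, (-(α j) * (k' j : ℝ))) + ∑ j, α j * (k₀ j : ℝ)) := by
      rw [hPdef, Real.rpow_add two_pos, Real.rpow_sum_of_pos two_pos,
        Real.rpow_sum_of_pos two_pos]
      congr 1 <;> refine Finset.prod_congr rfl fun j _ => ?_ <;>
        rw [Real.rpow_mul (by norm_num), Real.rpow_natCast]
    rw [hP]
    apply Real.rpow_lt_one_of_one_lt_of_neg one_lt_two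
    have : ∑ j, (-(α j) * (k' j : ℝ)) = -∑ j, α j * (k' j : ℝ) := by
      rw [← Finset.sum_neg_distrib]; exact Finset.sum_congr rfl fun j _ => by ring
    rw [this]; linarith
  -- eventually ρ z ≤ 1, and extract Z ≥ 1
  have hev : ∀ᶠ z in atTop, ρ z < 1 := hρlim.eventually_lt_const hPlt
  obtain ⟨Z₀, hZ₀⟩ := eventually_atTop.1 hev
  set Z : ℝ := max Z₀ 1 with hZdef
  have hZ1 : (1 : ℝ) ≤ Z := le_max_right _ _
  have hZpos : (0 : ℝ) < Z := lt_of_lt_of_le one_pos hZ1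
  -- key step inequality
  have hstep : ∀ z : ℝ, Z ≤ z → g (2 * z) / h (2 * z) ≤ g z / h z := by
    intro z hz
    have hz0 : (0 : ℝ) < z := lt_of_lt_of_le hZpos hz
    have h2z0 : (0 : ℝ) ≤ 2 * z := by linarith
    have hρz : ρ z < 1 := hZ₀ z (le_trans (le_max_left _ _) hz)
    have hρeq : ρ z = (g (2 * z) * h z) / (g z * h (2 * z)) := by
      rw [hρdef]
      simp only [div_pow]
      rw [Finset.prod_div_distrib, Finset.prod_div_distrib]
      rw [hgdef, hhdef]
      field_simp
    rw [hρeq] at hρz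
    have hden : 0 < g z * h (2 * z) := mul_pos (hgpos z hz0.le) (hhpos _ h2z0)
    rw [div_lt_one hden] at hρz
    rw [div_le_div_iff₀ (hhpos _ h2z0) (hhpos z hz0.le)]
    nlinarith
  -- continuity of R on [0, 2Z] and boundedness
  have hgcont : ContinuousOn g (Set.Ici 0) := by
    apply continuousOn_finset_prod
    exact fun j _ => (hBcont j).pow _
  have hhcont : ContinuousOn h (Set.Ici 0) := by
    apply continuousOn_finset_prod
    exact fun j _ => (hBcont j).pow _
  have hRcont : ContinuousOn (fun z => g z / h z) (Set.Ici 0) :=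
    hgcont.div hhcont fun z hz => ne_of_gt (hhpos z hz)
  have hcpt : IsCompact (Set.Icc (0 : ℝ) (2 * Z)) := isCompact_Icc
  have hne : (Set.Icc (0 : ℝ) (2 * Z)).Nonempty := ⟨0, by constructor <;> linarith⟩
  obtain ⟨x0, hx0mem, hx0⟩ := hcpt.exists_isMaxOn hne
    (hRcont.mono (by intro x hx; exact hx.1))
  rw [isMaxOn_iff] at hx0
  set M : ℝ := g x0 / h x0 with hMdef
  have hMpos : 0 < M := div_pos (hgpos x0 hx0mem.1) (hhpos x0 hx0mem.1)
  -- induction: all z covered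
  have hind : ∀ n : ℕ, ∀ z : ℝ, 0 ≤ z → z ≤ 2 ^ n * (2 * Z) → g z / h z ≤ M := by
    intro n
    induction n with
    | zero => intro z hz hz2; exact hx0 z ⟨hz, by simpa using hz2⟩
    | succ n ih =>
      intro z hz hz2
      by_cases hcase : z ≤ 2 * Z
      · exact hx0 z ⟨hz, hcase⟩
      · push_neg at hcase
        have hzZ : Z ≤ z / 2 := by linarith
        have h1 : g z / h z ≤ g (z / 2) / h (z / 2) := by
          have := hstep (z / 2) hzZ
          rw [show 2 * (z / 2) = z by ring] at this
          exact this
        refine h1.trans (ih (z / 2) (by linarith) ?_)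
        rw [pow_succ] at hz2
        nlinarith [pow_pos (two_pos (α := ℝ)) n]
  refine ⟨M, hMpos, fun z hz => ?_⟩
  obtain ⟨n, hn⟩ := pow_unbounded_of_one_lt z (one_lt_two (α := ℝ))
  have hzn : z ≤ 2 ^ n * (2 * Z) := by
    have h1 : (1 : ℝ) ≤ 2 * Z := by linarith
    nlinarith [pow_pos (two_pos (α := ℝ)) n]
  have := hind n z hz hzn
  rw [div_le_iff₀ (hhpos z hz)] at this
  exact this

/-- Under the long-range dependence conditions, there is a constant `C > 0`
such that for every level `l > l₀` and every admissible tuple `k` at level `l`,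
`∏ Bⱼ(z)^{kⱼ} ≤ C · ∏ Bⱼ(z)^{k₀ⱼ}` for all `z ≥ 0`. -/
theorem stmt3 (m : ℕ) (hm : 1 ≤ m) (α : Fin m → ℝ) (hα : ∀ j, 0 < α j)
    (L : Fin m → ℝ → ℝ) (hL : ∀ j, SlowlyVarying (L j))
    (B : Fin m → ℝ → ℝ)
    (hBcont : ∀ j, ContinuousOn (B j) (Set.Ici 0))
    (hBmem : ∀ j, ∀ z : ℝ, 0 ≤ z → B j z ∈ Set.Ioc (0 : ℝ) 1)
    (hB0 : ∀ j, B j 0 = 1)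
    (hBeq : ∀ j, ∀ z : ℝ, 0 < z → B j z = z ^ (-(α j)) * L j z)
    (l₀ : ℕ) (hl₀ : 1 ≤ l₀) (k₀ : Fin m → ℕ)
    (hsum₀ : ∑ j, k₀ j = l₀)
    (hlt : ∑ j, α j * (k₀ j : ℝ) < ((l₀ : ℝ) + 1) * ⨅ j, α j) :
    ∃ C : ℝ, 0 < C ∧
      ∀ l : ℕ, l₀ < l → ∀ k : Fin m → ℕ, ∑ j, k j = l →
        ∀ z : ℝ, 0 ≤ z → ∏ j, B j z ^ k j ≤ C * ∏ j, B j z ^ k₀ j := by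
  haveI : NeZero m := ⟨by omega⟩
  have hBpos : ∀ j, ∀ z : ℝ, 0 ≤ z → 0 < B j z := fun j z hz => (hBmem j z hz).1
  -- for any k' summing to l₀+1, the exponent condition holds
  have hθ : ∀ k' : Fin m → ℕ, ∑ j, k' j = l₀ + 1 →
      ∑ j, α j * (k₀ j : ℝ) < ∑ j, α j * (k' j : ℝ) := by
    intro k' hk'
    refine hlt.trans_le ?_
    have h1 : ((l₀ : ℝ) + 1) * ⨅ j, α j = ∑ j, (⨅ i, α i) * (k' j : ℝ) := by
      rw [← Finset.mul_sum]
      have : (∑ j, ((k' j : ℝ))) = ((l₀ : ℝ) + 1) := by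
        rw [← Nat.cast_sum, hk']; push_cast; ring
      rw [this, mul_comm]
    rw [h1]
    refine Finset.sum_le_sum fun j _ => ?_
    exact mul_le_mul_of_nonneg_right (ciInf_le (Finite.bddBelow_range α) j)
      (Nat.cast_nonneg _)
  -- choose a constant for each candidate tuple
  have hchoice : ∀ f : Fin m → Fin (l₀ + 2), ∃ C : ℝ, 0 < C ∧
      ((∑ j, (f j : ℕ)) = l₀ + 1 → ∀ z : ℝ, 0 ≤ z →
        ∏ j, B j z ^ (f j : ℕ) ≤ C * ∏ j, B j z ^ k₀ j) := by
    intro f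
    by_cases hf : (∑ j, (f j : ℕ)) = l₀ + 1
    · obtain ⟨C, hC, hCle⟩ := key_bound α hα L hL B hBcont hBmem hBeq k₀
        (fun j => (f j : ℕ)) (hθ _ hf)
      exact ⟨C, hC, fun _ => hCle⟩
    · exact ⟨1, one_pos, fun h => absurd h hf⟩
  choose Cf hCfpos hCfle using hchoice
  set C : ℝ := ∑ f : Fin m → Fin (l₀ + 2), Cf f with hCdef
  have hCpos : 0 < C :=
    Finset.sum_pos (fun f _ => hCfpos f) Finset.univ_nonempty
  refine ⟨C, hCpos, fun l hl k hk z hz => ?_⟩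
  -- extract a subtuple k' ≤ k with sum l₀ + 1
  obtain ⟨k', hk'le, hk'sum⟩ := aux_exists_le (l₀ + 1) k (by omega)
  have hk'bd : ∀ j, k' j < l₀ + 2 := by
    intro j
    have := Finset.single_le_sum (f := k') (fun i _ => Nat.zero_le _) (Finset.mem_univ j)
    omega
  set f : Fin m → Fin (l₀ + 2) := fun j => ⟨k' j, hk'bd j⟩ with hfdef
  have hfval : ∀ j, (f j : ℕ) = k' j := fun j => rfl
  have hfsum : (∑ j, (f j : ℕ)) = l₀ + 1 := by simpa [hfval] using hk'sum
  have h1 : ∏ j, B j z ^ k j ≤ ∏ j, B j z ^ k' j := by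
    refine Finset.prod_le_prod (fun j _ => pow_nonneg (hBpos j z hz).le _) fun j _ => ?_
    exact pow_le_pow_of_le_one (hBpos j z hz).le (hBmem j z hz).2 (hk'le j)
  have h2 : ∏ j, B j z ^ k' j ≤ Cf f * ∏ j, B j z ^ k₀ j := by
    simpa [hfval] using hCfle f hfsum z hz
  have h3 : Cf f ≤ C :=
    Finset.single_le_sum (f := Cf) (fun g _ => (hCfpos g).le) (Finset.mem_univ f)
  have h4 : (0 : ℝ) ≤ ∏ j, B j z ^ k₀ j :=
    Finset.prod_nonneg fun j _ => pow_nonneg (hBpos j z hz).le _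
  calc ∏ j, B j z ^ k j ≤ Cf f * ∏ j, B j z ^ k₀ j := h1.trans h2
    _ ≤ C * ∏ j, B j z ^ k₀ j := mul_le_mul_of_nonneg_right h3 h4
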